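/- Suppose A x̂_q ≤ b (componentwise) and x̂_q ∉ P for all q ∈ {1, …, Q}, and let x̄ = (1/Q) Σ_{q=1}^Q x̂_q. Then every feasible solution (c, y, ε_1, …, ε_Q) of GIO_R(X̂) with bᵀ y ≠ 0 satisfies Σ_{q=1}^Q |ε_q − 1| = Q · |cᵀ x̄ − bᵀ y| / |bᵀ y|. Consequently, the optimal value of GIO_R(X̂) equals Q times the optimal value of the single-point problem GIO_R({x̄}) (which coincides with the relative duality gap inverse problem for the alternate forward problem min{−cᵀ x : A x ≤ b} with observed decision x̄), and a pair (c, y) is part of an optimal solution of GIO_R(X̂) if and only if it is part of an optimal solution of GIO_R({x̄}). -/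

import Mathlib

open Matrix

/-- Feasibility for the relative duality gap inverse problem `GIO_R(X̂)`,
including the convention that `bᵀ y = 0` forces `ε_q = 1` for all `q`. -/
def FeasR {m n Q : ℕ} (A : Matrix (Fin m) (Fin n) ℝ) (b : Fin m → ℝ)
    (N : (Fin n → ℝ) → ℝ) (xhat : Fin Q → Fin n → ℝ)
    (c : Fin n → ℝ) (y : Fin m → ℝ) (ε : Fin Q → ℝ) : Prop :=
  Aᵀ.mulVec y = c ∧ (∀ i, 0 ≤ y i) ∧ (∀ q, c ⬝ᵥ xhat q = ε q * (b ⬝ᵥ y)) ∧ N c = 1 ∧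
    (b ⬝ᵥ y = 0 → ∀ q, ε q = 1)

/-- Optimality for `GIO_R(X̂)`. -/
def OptR {m n Q : ℕ} (A : Matrix (Fin m) (Fin n) ℝ) (b : Fin m → ℝ)
    (N : (Fin n → ℝ) → ℝ) (xhat : Fin Q → Fin n → ℝ)
    (c : Fin n → ℝ) (y : Fin m → ℝ) (ε : Fin Q → ℝ) : Prop :=
  FeasR A b N xhat c y ε ∧
    ∀ c' y' ε', FeasR A b N xhat c' y' ε' → ∑ q, |ε q - 1| ≤ ∑ q, |ε' q - 1|

theorem stmt_11
    (m n Q : ℕ) (hm : 0 < m) (hn : 0 < n) (hQ : 0 < Q)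
    (A : Matrix (Fin m) (Fin n) ℝ) (b : Fin m → ℝ) (hb : b ≠ 0)
    (hrows : ∀ i, A i ≠ 0)
    (hPint : (interior {x : Fin n → ℝ | ∀ i, b i ≤ A.mulVec x i}).Nonempty)
    -- the normalization norm ‖·‖'
    (N : (Fin n → ℝ) → ℝ)
    (hN₁ : ∀ x y, N (x + y) ≤ N x + N y)
    (hN₂ : ∀ (a : ℝ) (x : Fin n → ℝ), N (a • x) = |a| * N x)
    (hN₃ : ∀ x, x ≠ 0 → 0 < N x)
    -- all observed decisions satisfy A x̂_q ≤ b and x̂_q ∉ P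
    (xhat : Fin Q → Fin n → ℝ)
    (hxle : ∀ q i, A.mulVec (xhat q) i ≤ b i)
    (hxnotP : ∀ q, ¬ ∀ i, b i ≤ A.mulVec (xhat q) i)
    -- the centroid x̄
    (xbar : Fin n → ℝ) (hxbar : xbar = (Q : ℝ)⁻¹ • ∑ q, xhat q) :
    -- 1. every feasible solution with bᵀ y ≠ 0 satisfies
    --    Σ|ε_q − 1| = Q |cᵀ x̄ − bᵀ y| / |bᵀ y|
    (∀ c y ε, FeasR A b N xhat c y ε → b ⬝ᵥ y ≠ 0 →
      ∑ q, |ε q - 1| = (Q : ℝ) * (|c ⬝ᵥ xbar - b ⬝ᵥ y| / |b ⬝ᵥ y|)) ∧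
    -- 2. the optimal value of GIO_R(X̂) is Q times that of GIO_R({x̄})
    sInf {v : ℝ | ∃ c y ε, FeasR A b N xhat c y ε ∧ v = ∑ q, |ε q - 1|} =
      (Q : ℝ) * sInf {v : ℝ | ∃ (c : Fin n → ℝ) (y : Fin m → ℝ) (ε : Fin 1 → ℝ),
        FeasR A b N (fun _ : Fin 1 => xbar) c y ε ∧ v = ∑ q, |ε q - 1|} ∧
    -- 3. (c, y) is part of an optimal solution of GIO_R(X̂) iff of GIO_R({x̄})
    ∀ c y, (∃ ε, OptR A b N xhat c y ε) ↔
      (∃ ε : Fin 1 → ℝ, OptR A b N (fun _ : Fin 1 => xbar) c y ε) := by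
  have hQ' : (0:ℝ) < Q := Nat.cast_pos.mpr hQ
  have hdot : ∀ (y : Fin m → ℝ) (x : Fin n → ℝ), (Aᵀ.mulVec y) ⬝ᵥ x = y ⬝ᵥ A.mulVec x := by
    intro y x
    rw [Matrix.mulVec_transpose, ← Matrix.dotProduct_mulVec]
  have hbarsum : ∀ c : Fin n → ℝ, c ⬝ᵥ xbar = (Q:ℝ)⁻¹ * ∑ q, c ⬝ᵥ xhat q := by
    intro c
    rw [hxbar, dotProduct_smul, smul_eq_mul]
    congr 1
    simp only [dotProduct, Finset.sum_apply, Finset.mul_sum]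
    exact Finset.sum_comm
  -- key inequality: cᵀ x̂_q ≤ bᵀ y whenever c = Aᵀ y and y ≥ 0
  have hle : ∀ (c : Fin n → ℝ) (y : Fin m → ℝ), Aᵀ.mulVec y = c → (∀ i, 0 ≤ y i) →
      ∀ q, c ⬝ᵥ xhat q ≤ b ⬝ᵥ y := by
    intro c y hc hy q
    rw [← hc, hdot, dotProduct_comm b y]
    exact Finset.sum_le_sum fun i _ => mul_le_mul_of_nonneg_left (hxle q i) (hy i)
  have hbarle : ∀ (c : Fin n → ℝ) (y : Fin m → ℝ), Aᵀ.mulVec y = c → (∀ i, 0 ≤ y i) →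
      c ⬝ᵥ xbar ≤ b ⬝ᵥ y := by
    intro c y hc hy
    rw [hbarsum]
    have h1 : ∑ q, c ⬝ᵥ xhat q ≤ ∑ _q : Fin Q, b ⬝ᵥ y :=
      Finset.sum_le_sum fun q _ => hle c y hc hy q
    rw [Finset.sum_const, Finset.card_univ, Fintype.card_fin, nsmul_eq_mul] at h1
    calc (Q:ℝ)⁻¹ * ∑ q, c ⬝ᵥ xhat q ≤ (Q:ℝ)⁻¹ * ((Q:ℝ) * (b ⬝ᵥ y)) :=
          mul_le_mul_of_nonneg_left h1 (by positivity)
      _ = b ⬝ᵥ y := by field_simp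
  -- Part 1
  have part1 : ∀ c y ε, FeasR A b N xhat c y ε → b ⬝ᵥ y ≠ 0 →
      ∑ q, |ε q - 1| = (Q : ℝ) * (|c ⬝ᵥ xbar - b ⬝ᵥ y| / |b ⬝ᵥ y|) := by
    intro c y ε hf h0
    obtain ⟨hc, hy, hε, hNc, hconv⟩ := hf
    have habs1 : ∀ q, |ε q - 1| = (b ⬝ᵥ y - c ⬝ᵥ xhat q) / |b ⬝ᵥ y| := by
      intro q
      have hεq : ε q = c ⬝ᵥ xhat q / (b ⬝ᵥ y) := by
        rw [eq_div_iff h0]; exact (hε q).symm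
      rw [hεq, div_sub_one h0, abs_div,
        abs_of_nonpos (by linarith [hle c y hc hy q] : c ⬝ᵥ xhat q - b ⬝ᵥ y ≤ 0)]
      ring
    rw [Finset.sum_congr rfl fun q _ => habs1 q, ← Finset.sum_div,
      abs_of_nonpos (by linarith [hbarle c y hc hy] : c ⬝ᵥ xbar - b ⬝ᵥ y ≤ 0),
      hbarsum, Finset.sum_sub_distrib, Finset.sum_const, Finset.card_univ,
      Fintype.card_fin, nsmul_eq_mul, ← mul_div_assoc]
    congr 1
    field_simp
    ring
  -- forward transfer
  have fwd : ∀ c y (ε : Fin Q → ℝ), FeasR A b N xhat c y ε →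
      ∃ ε' : Fin 1 → ℝ, FeasR A b N (fun _ : Fin 1 => xbar) c y ε' ∧
        ∑ q, |ε q - 1| = (Q:ℝ) * ∑ q : Fin 1, |ε' q - 1| := by
    intro c y ε hf
    obtain ⟨hc, hy, hε, hNc, hconv⟩ := hf
    by_cases h0 : b ⬝ᵥ y = 0
    · refine ⟨fun _ => 1, ⟨hc, hy, ?_, hNc, fun _ _ => rfl⟩, ?_⟩
      · intro q
        have hz : ∀ q, c ⬝ᵥ xhat q = 0 := fun q => by rw [hε q, h0, mul_zero]
        rw [h0, mul_zero]
        show c ⬝ᵥ xbar = 0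
        rw [hbarsum]
        simp [hz]
      · simp [hconv h0]
    · refine ⟨fun _ => c ⬝ᵥ xbar / (b ⬝ᵥ y), ⟨hc, hy, ?_, hNc, fun h => absurd h h0⟩, ?_⟩
      · intro q; exact (div_mul_cancel₀ _ h0).symm
      · rw [part1 c y ε ⟨hc, hy, hε, hNc, hconv⟩ h0]
        congr 1
        rw [Fin.sum_univ_one, div_sub_one h0, abs_div]
  -- backward transfer
  have bwd : ∀ c y (ε' : Fin 1 → ℝ), FeasR A b N (fun _ : Fin 1 => xbar) c y ε' →
      ∃ ε : Fin Q → ℝ, FeasR A b N xhat c y ε ∧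
        ∑ q, |ε q - 1| = (Q:ℝ) * ∑ q : Fin 1, |ε' q - 1| := by
    intro c y ε' hf
    obtain ⟨hc, hy, hε', hNc, hconv⟩ := hf
    by_cases h0 : b ⬝ᵥ y = 0
    · refine ⟨fun _ => 1, ⟨hc, hy, ?_, hNc, fun _ _ => rfl⟩, ?_⟩
      · have hxb : c ⬝ᵥ xbar = 0 := by rw [hε' 0, h0, mul_zero]
        have hsum : ∑ q, c ⬝ᵥ xhat q = 0 := by
          have h2 := hbarsum c
          rw [hxb] at h2
          have := mul_left_cancel₀ (inv_ne_zero (ne_of_gt hQ')) (h2.symm.trans (mul_zero _).symm)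
          exact this
        have hz : ∀ q ∈ Finset.univ, c ⬝ᵥ xhat q = 0 :=
          (Finset.sum_eq_zero_iff_of_nonpos fun q _ => (hle c y hc hy q).trans h0.le).mp hsum
        intro q
        rw [hz q (Finset.mem_univ q), h0, mul_zero]
      · simp [hconv h0]
    · refine ⟨fun q => c ⬝ᵥ xhat q / (b ⬝ᵥ y),
        ⟨hc, hy, fun q => (div_mul_cancel₀ _ h0).symm, hNc, fun h => absurd h h0⟩, ?_⟩
      rw [part1 c y _ ⟨hc, hy, fun q => (div_mul_cancel₀ _ h0).symm, hNc,
        fun h => absurd h h0⟩ h0]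
      congr 1
      have hε0 : ε' 0 = c ⬝ᵥ xbar / (b ⬝ᵥ y) := by
        rw [eq_div_iff h0]; exact (hε' 0).symm
      rw [Fin.sum_univ_one, hε0, div_sub_one h0, abs_div]
  -- a feasible point exists
  obtain ⟨i0, hi0⟩ : ∃ i, b i ≠ 0 := by
    by_contra h; push_neg at h; exact hb (funext h)
  have hNA : 0 < N (A i0) := hN₃ _ (hrows i0)
  set t : ℝ := (N (A i0))⁻¹ with ht_def
  have ht : 0 < t := inv_pos.mpr hNA
  set y0 : Fin m → ℝ := fun i => if i = i0 then t else 0 with hy0_def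
  set c0 : Fin n → ℝ := Aᵀ.mulVec y0 with hc0_def
  have hc0 : c0 = t • A i0 := by
    funext j
    simp only [hc0_def, Matrix.mulVec, dotProduct, Matrix.transpose_apply, hy0_def,
      mul_ite, mul_zero]
    simp [Finset.sum_ite_eq']
    ring
  have hby0 : b ⬝ᵥ y0 = b i0 * t := by
    simp only [dotProduct, hy0_def, mul_ite, mul_zero]
    simp [Finset.sum_ite_eq']
  have hby0ne : b ⬝ᵥ y0 ≠ 0 := by rw [hby0]; exact mul_ne_zero hi0 (ne_of_gt ht)
  have hfeas0 : FeasR A b N xhat c0 y0 (fun q => c0 ⬝ᵥ xhat q / (b ⬝ᵥ y0)) := by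
    refine ⟨rfl, ?_, ?_, ?_, fun h => absurd h hby0ne⟩
    · intro i; simp only [hy0_def]; split
      · exact le_of_lt ht
      · exact le_refl 0
    · intro q; exact (div_mul_cancel₀ _ hby0ne).symm
    · rw [hc0, hN₂, abs_of_pos ht, ht_def]
      field_simp
  -- the two value sets
  set S1 : Set ℝ := {v : ℝ | ∃ c y ε, FeasR A b N xhat c y ε ∧ v = ∑ q, |ε q - 1|} with hS1_def
  set S2 : Set ℝ := {v : ℝ | ∃ (c : Fin n → ℝ) (y : Fin m → ℝ) (ε : Fin 1 → ℝ),
    FeasR A b N (fun _ : Fin 1 => xbar) c y ε ∧ v = ∑ q, |ε q - 1|} with hS2_def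
  have hS1ne : S1.Nonempty := ⟨_, c0, y0, _, hfeas0, rfl⟩
  have hS2ne : S2.Nonempty := by
    obtain ⟨ε', hf', _⟩ := fwd c0 y0 _ hfeas0
    exact ⟨_, c0, y0, ε', hf', rfl⟩
  have hbdd1 : BddBelow S1 := by
    refine ⟨0, ?_⟩
    rintro v ⟨c, y, ε, hf, rfl⟩
    exact Finset.sum_nonneg fun q _ => abs_nonneg _
  have hbdd2 : BddBelow S2 := by
    refine ⟨0, ?_⟩
    rintro v ⟨c, y, ε, hf, rfl⟩
    exact Finset.sum_nonneg fun q _ => abs_nonneg _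
  refine ⟨part1, ?_, ?_⟩
  · -- Part 2
    apply le_antisymm
    · have h : sInf S1 / Q ≤ sInf S2 := by
        apply le_csInf hS2ne
        rintro w ⟨c, y, ε', hf, rfl⟩
        obtain ⟨ε, hfX, hval⟩ := bwd c y ε' hf
        have hmem : (Q:ℝ) * ∑ q : Fin 1, |ε' q - 1| ∈ S1 := ⟨c, y, ε, hfX, hval.symm⟩
        have := csInf_le hbdd1 hmem
        rw [div_le_iff₀ hQ']
        linarith
      calc sInf S1 = (Q:ℝ) * (sInf S1 / Q) := by field_simp
        _ ≤ (Q:ℝ) * sInf S2 := mul_le_mul_of_nonneg_left h hQ'.le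
    · apply le_csInf hS1ne
      rintro v ⟨c, y, ε, hf, rfl⟩
      obtain ⟨ε', hfb, hval⟩ := fwd c y ε hf
      have h2 : sInf S2 ≤ ∑ q : Fin 1, |ε' q - 1| := csInf_le hbdd2 ⟨c, y, ε', hfb, rfl⟩
      rw [hval]
      exact mul_le_mul_of_nonneg_left h2 hQ'.le
  · -- Part 3
    intro c y
    constructor
    · rintro ⟨ε, hf, hopt⟩
      obtain ⟨ε', hf', hval⟩ := fwd c y ε hf
      refine ⟨ε', hf', ?_⟩
      intro c'' y'' ε'' hf''
      obtain ⟨ε₂, hf₂, hval₂⟩ := bwd c'' y'' ε'' hf''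
      have h3 := hopt c'' y'' ε₂ hf₂
      rw [hval, hval₂] at h3
      exact le_of_mul_le_mul_left h3 hQ'
    · rintro ⟨ε', hf', hopt⟩
      obtain ⟨ε, hf, hval⟩ := bwd c y ε' hf'
      refine ⟨ε, hf, ?_⟩
      intro c'' y'' ε'' hf''
      obtain ⟨ε₂', hf₂', hval₂⟩ := fwd c'' y'' ε'' hf''
      have h3 := hopt c'' y'' ε₂' hf₂'
      rw [hval, hval₂]
      exact mul_le_mul_of_nonneg_left h3 hQ'.le
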